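/- arXiv:1107.1028 — 2 statements merged into one kernel-verified Lean document; each statement's English description precedes it below -/
import Mathlib

section
/- There exists a constant C such that the following holds. Let v, w : ℝ² → ℝ² be continuously differentiable vector fields with compact support contained in Ω₊ = {(x,y) : y > 1}, and let ū : Ω₊ → ℝ² be a continuous vector field with ‖ū‖_{L²(Ω₊)} < ∞ and M := sup_{(x,y)∈Ω₊} y·|ū(x,y)| < ∞. Then |∫_{Ω₊} [((v+e₁)·∇)w]·ū dx dy| ≤ C (1 + ‖∇v‖_{L²(Ω₊)}) ‖∇w‖_{L²(Ω₊)} (‖ū‖_{L²(Ω₊)} + M). -/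
open MeasureTheory

noncomputable section

/-- Squared Euclidean norm of a vector in `ℝ²`. -/
def nsq (v : ℝ × ℝ) : ℝ := v.1 ^ 2 + v.2 ^ 2

/-- Euclidean dot product on `ℝ²`. -/
def dot2 (a b : ℝ × ℝ) : ℝ := a.1 * b.1 + a.2 * b.2

/-- Squared Frobenius norm of the Jacobian matrix `∇v` of a vector field `v` at `p`. -/
def jacsq (v : ℝ × ℝ → ℝ × ℝ) (p : ℝ × ℝ) : ℝ :=
  nsq (fderiv ℝ v p (1, 0)) + nsq (fderiv ℝ v p (0, 1))

/-- The half-plane `Ω₊ = {(x,y) : y > 1}`. -/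
def OmegaPlus : Set (ℝ × ℝ) := {p | 1 < p.2}

open Set Topology

lemma nsq_nonneg (v : ℝ × ℝ) : 0 ≤ nsq v := by unfold nsq; positivity

lemma jacsq_nonneg (v : ℝ × ℝ → ℝ × ℝ) (p : ℝ × ℝ) : 0 ≤ jacsq v p :=
  add_nonneg (nsq_nonneg _) (nsq_nonneg _)

lemma continuous_nsq : Continuous nsq := by
  unfold nsq; fun_prop

lemma isOpen_OmegaPlus : IsOpen OmegaPlus :=
  isOpen_lt continuous_const continuous_snd

lemma measurableSet_OmegaPlus : MeasurableSet OmegaPlus :=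
  isOpen_OmegaPlus.measurableSet

lemma abs_dot2_le (a b : ℝ × ℝ) :
    |dot2 a b| ≤ Real.sqrt (nsq a) * Real.sqrt (nsq b) := by
  have h1 : dot2 a b ^ 2 ≤ nsq a * nsq b := by
    unfold dot2 nsq; nlinarith [sq_nonneg (a.1 * b.2 - a.2 * b.1)]
  have h2 : |dot2 a b| = Real.sqrt (dot2 a b ^ 2) := (Real.sqrt_sq_eq_abs _).symm
  rw [h2, ← Real.sqrt_mul (nsq_nonneg a)]
  exact Real.sqrt_le_sqrt h1

lemma sqrt_nsq_apply_le (D : ℝ × ℝ →L[ℝ] ℝ × ℝ) (z : ℝ × ℝ) :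
    Real.sqrt (nsq (D z)) ≤
      Real.sqrt (nsq (D (1, 0)) + nsq (D (0, 1))) * Real.sqrt (nsq z) := by
  have hz : z = z.1 • ((1 : ℝ), (0 : ℝ)) + z.2 • ((0 : ℝ), (1 : ℝ)) := by
    ext <;> simp
  have hD : D z = z.1 • D (1, 0) + z.2 • D (0, 1) := by
    conv_lhs => rw [hz]
    rw [map_add, D.map_smul, D.map_smul]
  have h1 : nsq (D z) ≤ (nsq (D (1, 0)) + nsq (D (0, 1))) * nsq z := by
    rw [hD]
    unfold nsq
    simp only [Prod.fst_add, Prod.snd_add, Prod.smul_fst, Prod.smul_snd, smul_eq_mul]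
    nlinarith [sq_nonneg (z.1 * (D (0,1)).1 - z.2 * (D (1,0)).1),
      sq_nonneg (z.1 * (D (0,1)).2 - z.2 * (D (1,0)).2), sq_nonneg (D (1,0)).1,
      sq_nonneg (D (1,0)).2, sq_nonneg (D (0,1)).1, sq_nonneg (D (0,1)).2,
      sq_nonneg z.1, sq_nonneg z.2]
  rw [← Real.sqrt_mul (add_nonneg (nsq_nonneg _) (nsq_nonneg _))]
  exact Real.sqrt_le_sqrt h1

lemma sqrt_nsq_add_le (a b : ℝ × ℝ) :
    Real.sqrt (nsq (a + b)) ≤ Real.sqrt (nsq a) + Real.sqrt (nsq b) := by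
  have ha := Real.sq_sqrt (nsq_nonneg a)
  have hb := Real.sq_sqrt (nsq_nonneg b)
  have hd : dot2 a b ≤ Real.sqrt (nsq a) * Real.sqrt (nsq b) :=
    le_trans (le_abs_self _) (abs_dot2_le a b)
  have h1 : nsq (a + b) ≤ (Real.sqrt (nsq a) + Real.sqrt (nsq b)) ^ 2 := by
    have : nsq (a + b) = nsq a + 2 * dot2 a b + nsq b := by
      unfold nsq dot2; simp only [Prod.fst_add, Prod.snd_add]; ring
    rw [this]; nlinarith
  calc Real.sqrt (nsq (a + b)) ≤ Real.sqrt ((Real.sqrt (nsq a) + Real.sqrt (nsq b)) ^ 2) :=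
        Real.sqrt_le_sqrt h1
    _ = Real.sqrt (nsq a) + Real.sqrt (nsq b) := by
        rw [Real.sqrt_sq (by positivity)]

/-- Cauchy–Schwarz for integrals. -/
lemma integral_mul_le_sqrt_mul_sqrt {α : Type*} [MeasurableSpace α] (μ : Measure α)
    (f g : α → ℝ) (hfm : AEStronglyMeasurable f μ) (hgm : AEStronglyMeasurable g μ)
    (hf2 : Integrable (fun a => f a ^ 2) μ) (hg2 : Integrable (fun a => g a ^ 2) μ) :
    ∫ a, f a * g a ∂μ ≤
      Real.sqrt (∫ a, f a ^ 2 ∂μ) * Real.sqrt (∫ a, g a ^ 2 ∂μ) := by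
  have hpq : Real.HolderConjugate 2 2 := ⟨by norm_num, by norm_num, by norm_num⟩
  have habs : Integrable (fun a => |f a| * |g a|) μ := by
    have hm : AEStronglyMeasurable (fun a => |f a| * |g a|) μ := by
      have := hfm.norm.mul hgm.norm
      exact this
    refine Integrable.mono' ((hf2.add hg2).div_const 2) hm ?_
    filter_upwards with a
    simp only [Pi.add_apply]
    rw [Real.norm_eq_abs, abs_of_nonneg (by positivity)]
    nlinarith [sq_nonneg (|f a| - |g a|), sq_abs (f a), sq_abs (g a)]
  have key := integral_mul_le_Lp_mul_Lq_of_nonneg (μ := μ) hpq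
    (f := fun a => |f a|) (g := fun a => |g a|)
    (Filter.Eventually.of_forall fun a => abs_nonneg _)
    (Filter.Eventually.of_forall fun a => abs_nonneg _)
    ?_ ?_
  · have hfg : Integrable (fun a => f a * g a) μ := by
      refine Integrable.mono' ((hf2.add hg2).div_const 2) (hfm.mul hgm) ?_
      filter_upwards with a
      simp only [Pi.add_apply]
      rw [Real.norm_eq_abs, abs_mul]
      nlinarith [sq_nonneg (|f a| - |g a|), sq_abs (f a), sq_abs (g a)]
    have h1 : ∫ a, f a * g a ∂μ ≤ ∫ a, |f a| * |g a| ∂μ := by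
      refine integral_mono hfg habs fun a => ?_
      calc f a * g a ≤ |f a * g a| := le_abs_self _
        _ = |f a| * |g a| := abs_mul _ _
    have e1 : ∀ x : ℝ, |x| ^ (2 : ℝ) = x ^ 2 := fun x => by
      rw [show (2 : ℝ) = ((2 : ℕ) : ℝ) by norm_num, Real.rpow_natCast, sq_abs]
    simp_rw [e1] at key
    rw [← Real.sqrt_eq_rpow, ← Real.sqrt_eq_rpow] at key
    exact h1.trans key
  · rw [show ENNReal.ofReal (2:ℝ) = 2 by norm_num]
    have hma : AEStronglyMeasurable (fun a => |f a|) μ := by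
      simpa [Real.norm_eq_abs] using hfm.norm
    exact (memLp_two_iff_integrable_sq hma).2 (by simpa [sq_abs] using hf2)
  · rw [show ENNReal.ofReal (2:ℝ) = 2 by norm_num]
    have hma : AEStronglyMeasurable (fun a => |g a|) μ := by
      simpa [Real.norm_eq_abs] using hgm.norm
    exact (memLp_two_iff_integrable_sq hma).2 (by simpa [sq_abs] using hg2)

lemma integrableOn_omega_of_support {f : ℝ × ℝ → ℝ} {K : Set (ℝ × ℝ)}
    (hK : IsCompact K) (hKΩ : K ⊆ OmegaPlus) (hfc : ContinuousOn f OmegaPlus)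
    (hsupp : Function.support f ⊆ K) : IntegrableOn f OmegaPlus := by
  have h1 : IntegrableOn f K := (hfc.mono hKΩ).integrableOn_compact hK
  have h2 : Integrable f :=
    (integrableOn_iff_integrable_of_support_subset hsupp).1 h1
  exact h2.integrableOn

lemma hardy1d (g : ℝ → ℝ) (hg : ContDiff ℝ 1 g) (hsupp : HasCompactSupport g)
    (hpos : tsupport g ⊆ Ioi 1) :
    ∫ y in Ioi (0:ℝ), (g y / y) ^ 2 ≤ 4 * ∫ y in Ioi (0:ℝ), deriv g y ^ 2 := by
  have hgd : Differentiable ℝ g := hg.differentiable one_ne_zero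
  have hg' : Continuous (deriv g) := hg.continuous_deriv le_rfl
  have hzero : ∀ y ∉ tsupport g, g y = 0 := fun y hy => image_eq_zero_of_notMem_tsupport hy
  have hderzero : ∀ y ∉ tsupport g, deriv g y = 0 := fun y hy => by
    by_contra h
    exact hy (support_deriv_subset (by simpa using h))
  -- continuity of g y / y
  have hcont : Continuous fun y => g y / y := by
    rw [continuous_iff_continuousAt]
    intro y
    by_cases hy : y ∈ tsupport g
    · have hy0 : y ≠ 0 := ne_of_gt (lt_trans one_pos (hpos hy))
      exact (hgd.continuous.continuousAt.div continuousAt_id hy0)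
    · have hev : ∀ᶠ z in 𝓝 y, g z = 0 :=
        Filter.eventually_of_mem ((isOpen_compl_iff.2 (isClosed_tsupport g)).mem_nhds hy)
          (fun z hz => hzero z hz)
      have heq : (fun z => g z / z) =ᶠ[𝓝 y] fun _ => 0 :=
        hev.mono (fun z hz => by simp [hz])
      exact continuousAt_const.congr heq.symm
  set q1 : ℝ → ℝ := fun y => (g y / y) ^ 2 with hq1
  set q3 : ℝ → ℝ := fun y => (g y / y) * deriv g y with hq3
  have hq1c : Continuous q1 := hcont.pow 2
  have hq3c : Continuous q3 := hcont.mul hg'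
  have hq1supp : HasCompactSupport q1 :=
    HasCompactSupport.intro hsupp (fun y hy => by simp [hq1, hzero y hy])
  have hq3supp : HasCompactSupport q3 :=
    HasCompactSupport.intro hsupp (fun y hy => by simp [hq3, hzero y hy])
  have hd2supp : HasCompactSupport fun y => deriv g y ^ 2 :=
    HasCompactSupport.intro hsupp (fun y hy => by simp [hderzero y hy])
  have int1 : Integrable q1 := hq1c.integrable_of_hasCompactSupport hq1supp
  have int3 : Integrable q3 := hq3c.integrable_of_hasCompactSupport hq3supp
  have int2 : Integrable fun y => deriv g y ^ 2 :=
    (hg'.pow 2).integrable_of_hasCompactSupport hd2supp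
  -- the auxiliary function φ
  set φ : ℝ → ℝ := fun y => -(g y ^ 2) / y with hφ
  have hder : ∀ y, HasDerivAt φ (q1 y - 2 * q3 y) y := by
    intro y
    by_cases hy : y ∈ tsupport g
    · have hy0 : y ≠ 0 := ne_of_gt (lt_trans one_pos (hpos hy))
      have hp : HasDerivAt (fun z => g z ^ 2) (2 * g y ^ 1 * deriv g y) y := by
        simpa using ((hgd y).hasDerivAt.fun_pow 2)
      have h2 : HasDerivAt φ
          ((-(2 * g y ^ 1 * deriv g y) * id y - -(g y ^ 2) * 1) / id y ^ 2) y :=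
        (hp.fun_neg).fun_div (hasDerivAt_id y) hy0
      convert h2 using 1
      simp only [hq1, hq3, id_eq]
      field_simp
      ring
    · have hval : q1 y - 2 * q3 y = 0 := by
        simp [hq1, hq3, hzero y hy]
      rw [hval]
      have hev : ∀ᶠ z in 𝓝 y, g z = 0 :=
        Filter.eventually_of_mem ((isOpen_compl_iff.2 (isClosed_tsupport g)).mem_nhds hy)
          (fun z hz => hzero z hz)
      have heq : φ =ᶠ[𝓝 y] fun _ => 0 := hev.mono (fun z hz => by simp [hφ, hz])
      exact (hasDerivAt_const y 0).congr_of_eventuallyEq heq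
  have hderiv_eq : deriv φ = fun y => q1 y - 2 * q3 y :=
    funext fun y => (hder y).deriv
  have hφC1 : ContDiff ℝ 1 φ := by
    rw [contDiff_one_iff_deriv]
    refine ⟨fun y => (hder y).differentiableAt, ?_⟩
    rw [hderiv_eq]
    exact hq1c.sub (continuous_const.mul hq3c)
  have hφsupp : HasCompactSupport φ :=
    HasCompactSupport.intro hsupp (fun y hy => by simp [hφ, hzero y hy])
  have hFTC := HasCompactSupport.integral_Ioi_deriv_eq hφC1 hφsupp 0
  have hφ0 : φ 0 = 0 := by simp [hφ]
  rw [hderiv_eq, hφ0, neg_zero] at hFTC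
  have hsplit : ∫ y in Ioi (0:ℝ), (q1 y - 2 * q3 y) =
      (∫ y in Ioi (0:ℝ), q1 y) - 2 * ∫ y in Ioi (0:ℝ), q3 y := by
    rw [integral_sub int1.integrableOn ((int3.const_mul 2).integrableOn),
      integral_const_mul]
  have hkey : ∫ y in Ioi (0:ℝ), q1 y = 2 * ∫ y in Ioi (0:ℝ), q3 y := by
    have := hsplit.symm.trans hFTC
    linarith [this]
  have hcs := integral_mul_le_sqrt_mul_sqrt (volume.restrict (Ioi (0:ℝ)))
    (fun y => g y / y) (deriv g) hcont.aestronglyMeasurable.restrict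
    hg'.aestronglyMeasurable.restrict int1.integrableOn int2.integrableOn
  have hI1 : (0:ℝ) ≤ ∫ y in Ioi (0:ℝ), q1 y :=
    integral_nonneg fun y => sq_nonneg _
  have hI2 : (0:ℝ) ≤ ∫ y in Ioi (0:ℝ), deriv g y ^ 2 :=
    integral_nonneg fun y => sq_nonneg _
  set I1 := ∫ y in Ioi (0:ℝ), q1 y with hI1d
  set I2 := ∫ y in Ioi (0:ℝ), deriv g y ^ 2 with hI2d
  have hs1 := Real.sq_sqrt hI1
  have hs2 := Real.sq_sqrt hI2
  have hn1 := Real.sqrt_nonneg I1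
  have hn2 := Real.sqrt_nonneg I2
  have hI3 : ∫ y in Ioi (0:ℝ), q3 y ≤ Real.sqrt I1 * Real.sqrt I2 := hcs
  nlinarith [sq_nonneg (Real.sqrt I1 - 2 * Real.sqrt I2), hkey]

lemma hardy2d (f : ℝ × ℝ → ℝ) (hf : ContDiff ℝ 1 f) (hsupp : HasCompactSupport f)
    (hΩ : tsupport f ⊆ OmegaPlus) :
    ∫ p : ℝ × ℝ, (f p / p.2) ^ 2 ≤ 4 * ∫ p : ℝ × ℝ, (fderiv ℝ f p (0, 1)) ^ 2 := by
  have hzero : ∀ p ∉ tsupport f, f p = 0 := fun p hp => image_eq_zero_of_notMem_tsupport hp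
  have hfc : Continuous f := hf.continuous
  have hDc : Continuous fun p : ℝ × ℝ => fderiv ℝ f p (0, 1) :=
    (hf.continuous_fderiv one_ne_zero).clm_apply continuous_const
  set H : ℝ × ℝ → ℝ := fun p => (f p / p.2) ^ 2 with hH
  set D2 : ℝ × ℝ → ℝ := fun p => (fderiv ℝ f p (0, 1)) ^ 2 with hD2
  have hHc : Continuous H := by
    rw [continuous_iff_continuousAt]
    intro p
    by_cases hp : p ∈ tsupport f
    · have hp0 : p.2 ≠ 0 := ne_of_gt (lt_trans one_pos (hΩ hp))
      exact ((hfc.continuousAt.div continuous_snd.continuousAt hp0).pow 2)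
    · have hev : ∀ᶠ q in 𝓝 p, f q = 0 :=
        Filter.eventually_of_mem ((isOpen_compl_iff.2 (isClosed_tsupport f)).mem_nhds hp)
          (fun q hq => hzero q hq)
      have heq : H =ᶠ[𝓝 p] fun _ => 0 := hev.mono (fun q hq => by simp [hH, hq])
      exact continuousAt_const.congr heq.symm
  have hHsupp : HasCompactSupport H :=
    HasCompactSupport.intro hsupp (fun p hp => by simp [hH, hzero p hp])
  have hD2supp : HasCompactSupport D2 := by
    refine HasCompactSupport.intro hsupp (fun p hp => ?_)
    have h0 : fderiv ℝ f p = 0 := by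
      by_contra h
      exact hp (support_fderiv_subset ℝ (by simpa using h))
    simp [hD2, h0]
  have intH : Integrable H := hHc.integrable_of_hasCompactSupport hHsupp
  have intD2 : Integrable D2 := (hDc.pow 2).integrable_of_hasCompactSupport hD2supp
  have hvol : (volume : Measure (ℝ × ℝ)) = (volume : Measure ℝ).prod volume :=
    Measure.volume_eq_prod ℝ ℝ
  have intH' : Integrable H ((volume : Measure ℝ).prod volume) := by rwa [← hvol]
  have intD2' : Integrable D2 ((volume : Measure ℝ).prod volume) := by rwa [← hvol]
  -- slice facts
  have hslice : ∀ x : ℝ, ∫ y : ℝ, H (x, y) ≤ 4 * ∫ y : ℝ, D2 (x, y) := by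
    intro x
    set gx : ℝ → ℝ := fun y => f (x, y) with hgx
    have hgxc1 : ContDiff ℝ 1 gx := hf.comp (contDiff_const.prodMk contDiff_id)
    have hgxzero : ∀ y : ℝ, (x, y) ∉ tsupport f → gx y = 0 := fun y hy => hzero _ hy
    have hgxsupp : HasCompactSupport gx := by
      refine HasCompactSupport.intro (IsCompact.image hsupp continuous_snd)
        (fun y hy => ?_)
      refine hgxzero y (fun hmem => hy ?_)
      exact ⟨(x, y), hmem, rfl⟩
    have hgxpos : tsupport gx ⊆ Ioi 1 := by
      have hcl : IsClosed {y : ℝ | (x, y) ∈ tsupport f} :=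
        (isClosed_tsupport f).preimage (Continuous.prodMk_right x)
      refine (closure_minimal ?_ hcl).trans ?_
      · intro y hy
        by_contra hmem
        exact hy (hgxzero y hmem)
      · intro y hy
        exact hΩ hy
    have hderiv : ∀ y : ℝ, deriv gx y = fderiv ℝ f (x, y) (0, 1) := by
      intro y
      have h1 : HasDerivAt (fun y : ℝ => (x, y)) ((0 : ℝ), (1 : ℝ)) y :=
        (hasDerivAt_const y x).prodMk (hasDerivAt_id y)
      have h2 := ((hf.differentiable one_ne_zero (x, y)).hasFDerivAt).comp_hasDerivAt y h1
      exact h2.deriv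
    have h1d := hardy1d gx hgxc1 hgxsupp hgxpos
    have e1 : ∫ y : ℝ, H (x, y) = ∫ y in Ioi (0:ℝ), (gx y / y) ^ 2 := by
      refine (setIntegral_eq_integral_of_forall_compl_eq_zero fun y hy => ?_).symm
      have : (x, y) ∉ tsupport f := fun hmem => by
        have := hΩ hmem
        simp only [OmegaPlus, Set.mem_setOf_eq] at this
        exact hy (lt_trans one_pos this)
      simp [hH, hzero _ this]
    have e2 : ∫ y : ℝ, D2 (x, y) = ∫ y in Ioi (0:ℝ), deriv gx y ^ 2 := by
      rw [show (fun y : ℝ => D2 (x, y)) = fun y => deriv gx y ^ 2 from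
        funext fun y => by rw [hderiv y]]
      refine (setIntegral_eq_integral_of_forall_compl_eq_zero fun y hy => ?_).symm
      have hmem : (x, y) ∉ tsupport f := fun hmem => by
        have := hΩ hmem
        simp only [OmegaPlus, Set.mem_setOf_eq] at this
        exact hy (lt_trans one_pos this)
      have h0 : fderiv ℝ f (x, y) = 0 := by
        by_contra h
        exact hmem (support_fderiv_subset ℝ (by simpa using h))
      rw [hderiv y, h0]
      simp
    rw [e1, e2]
    exact h1d
  calc ∫ p : ℝ × ℝ, H p = ∫ x : ℝ, ∫ y : ℝ, H (x, y) := by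
        rw [hvol]; exact integral_prod H intH'
    _ ≤ ∫ x : ℝ, 4 * ∫ y : ℝ, D2 (x, y) := by
        refine integral_mono_of_nonneg ?_ ((intD2'.integral_prod_left).const_mul 4) ?_
        · exact Filter.Eventually.of_forall fun x => integral_nonneg fun y => sq_nonneg _
        · exact Filter.Eventually.of_forall hslice
    _ = 4 * ∫ x : ℝ, ∫ y : ℝ, D2 (x, y) := integral_const_mul 4 _
    _ = 4 * ∫ p : ℝ × ℝ, D2 p := by rw [hvol]; rw [integral_prod D2 intD2']

lemma continuous_div_sq (f : ℝ × ℝ → ℝ) (hf : Continuous f)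
    (hΩ : tsupport f ⊆ OmegaPlus) : Continuous fun p : ℝ × ℝ => (f p / p.2) ^ 2 := by
  rw [continuous_iff_continuousAt]
  intro p
  by_cases hp : p ∈ tsupport f
  · have hp0 : p.2 ≠ 0 := ne_of_gt (lt_trans one_pos (hΩ hp))
    exact ((hf.continuousAt.div continuous_snd.continuousAt hp0).pow 2)
  · have hev : ∀ᶠ q in 𝓝 p, f q = 0 :=
      Filter.eventually_of_mem ((isOpen_compl_iff.2 (isClosed_tsupport f)).mem_nhds hp)
        (fun q hq => image_eq_zero_of_notMem_tsupport hq)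
    have heq : (fun p : ℝ × ℝ => (f p / p.2) ^ 2) =ᶠ[𝓝 p] fun _ => 0 :=
      hev.mono (fun q hq => by simp [hq])
    exact continuousAt_const.congr heq.symm

lemma integrable_div_sq (f : ℝ × ℝ → ℝ) (hf : Continuous f) (hsupp : HasCompactSupport f)
    (hΩ : tsupport f ⊆ OmegaPlus) : Integrable fun p : ℝ × ℝ => (f p / p.2) ^ 2 :=
  (continuous_div_sq f hf hΩ).integrable_of_hasCompactSupport
    (HasCompactSupport.intro hsupp fun p hp => by simp [image_eq_zero_of_notMem_tsupport hp])

lemma continuous_jacsq (v : ℝ × ℝ → ℝ × ℝ) (hv : ContDiff ℝ 1 v) :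
    Continuous (jacsq v) := by
  have h := hv.continuous_fderiv one_ne_zero
  exact (continuous_nsq.comp (h.clm_apply continuous_const)).add
    (continuous_nsq.comp (h.clm_apply continuous_const))

lemma jacsq_zero_of_nmem (v : ℝ × ℝ → ℝ × ℝ) {p : ℝ × ℝ} (hp : p ∉ tsupport v) :
    jacsq v p = 0 := by
  have h0 : fderiv ℝ v p = 0 := by
    by_contra h
    exact hp (support_fderiv_subset ℝ (by simpa using h))
  simp [jacsq, h0, nsq]

lemma integrable_jacsq (v : ℝ × ℝ → ℝ × ℝ) (hv : ContDiff ℝ 1 v)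
    (hsupp : HasCompactSupport v) : Integrable (jacsq v) :=
  (continuous_jacsq v hv).integrable_of_hasCompactSupport
    (HasCompactSupport.intro hsupp fun p hp => jacsq_zero_of_nmem v hp)

lemma fderiv_fst_apply (v : ℝ × ℝ → ℝ × ℝ) (hv : ContDiff ℝ 1 v) (p z : ℝ × ℝ) :
    fderiv ℝ (fun q => (v q).1) p z = (fderiv ℝ v p z).1 := by
  have h := ((ContinuousLinearMap.fst ℝ ℝ ℝ).hasFDerivAt (x := v p)).comp p
    (hv.differentiable one_ne_zero p).hasFDerivAt
  rw [show (fun q => (v q).1) = (ContinuousLinearMap.fst ℝ ℝ ℝ) ∘ v from rfl, h.fderiv]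
  rfl

lemma fderiv_snd_apply (v : ℝ × ℝ → ℝ × ℝ) (hv : ContDiff ℝ 1 v) (p z : ℝ × ℝ) :
    fderiv ℝ (fun q => (v q).2) p z = (fderiv ℝ v p z).2 := by
  have h := ((ContinuousLinearMap.snd ℝ ℝ ℝ).hasFDerivAt (x := v p)).comp p
    (hv.differentiable one_ne_zero p).hasFDerivAt
  rw [show (fun q => (v q).2) = (ContinuousLinearMap.snd ℝ ℝ ℝ) ∘ v from rfl, h.fderiv]
  rfl

lemma hardy_vec (v : ℝ × ℝ → ℝ × ℝ) (hv : ContDiff ℝ 1 v) (hsupp : HasCompactSupport v)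
    (hΩ : tsupport v ⊆ OmegaPlus) :
    ∫ p in OmegaPlus, nsq (v p) / p.2 ^ 2 ≤ 4 * ∫ p in OmegaPlus, jacsq v p := by
  set f1 : ℝ × ℝ → ℝ := fun p => (v p).1 with hf1
  set f2 : ℝ × ℝ → ℝ := fun p => (v p).2 with hf2
  have hvz : ∀ p ∉ tsupport v, v p = 0 := fun p hp => image_eq_zero_of_notMem_tsupport hp
  have hc1 : ContDiff ℝ 1 f1 := (contDiff_fst.comp hv : _)
  have hc2 : ContDiff ℝ 1 f2 := (contDiff_snd.comp hv : _)
  have hs1 : HasCompactSupport f1 :=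
    HasCompactSupport.intro hsupp fun p hp => by simp [hf1, hvz p hp]
  have hs2 : HasCompactSupport f2 :=
    HasCompactSupport.intro hsupp fun p hp => by simp [hf2, hvz p hp]
  have ht1 : tsupport f1 ⊆ OmegaPlus := by
    refine (closure_minimal ?_ (isClosed_tsupport v)).trans hΩ
    intro p hp
    refine subset_tsupport v ?_
    intro h
    exact hp (by simp [hf1, h])
  have ht2 : tsupport f2 ⊆ OmegaPlus := by
    refine (closure_minimal ?_ (isClosed_tsupport v)).trans hΩ
    intro p hp
    refine subset_tsupport v ?_
    intro h
    exact hp (by simp [hf2, h])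
  have hhar1 := hardy2d f1 hc1 hs1 ht1
  have hhar2 := hardy2d f2 hc2 hs2 ht2
  -- rewrite fderiv components
  have he1 : ∀ p : ℝ × ℝ, (fderiv ℝ f1 p (0, 1)) ^ 2 = ((fderiv ℝ v p (0, 1)).1) ^ 2 :=
    fun p => by rw [fderiv_fst_apply v hv]
  have he2 : ∀ p : ℝ × ℝ, (fderiv ℝ f2 p (0, 1)) ^ 2 = ((fderiv ℝ v p (0, 1)).2) ^ 2 :=
    fun p => by rw [fderiv_snd_apply v hv]
  rw [show (fun p : ℝ × ℝ => (fderiv ℝ f1 p (0,1)) ^ 2) =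
    fun p : ℝ × ℝ => ((fderiv ℝ v p (0,1)).1) ^ 2 from funext he1] at hhar1
  rw [show (fun p : ℝ × ℝ => (fderiv ℝ f2 p (0,1)) ^ 2) =
    fun p : ℝ × ℝ => ((fderiv ℝ v p (0,1)).2) ^ 2 from funext he2] at hhar2
  -- integrable pieces
  have hDc : Continuous fun p : ℝ × ℝ => fderiv ℝ v p (0, 1) :=
    (hv.continuous_fderiv one_ne_zero).clm_apply continuous_const
  have hD0 : ∀ p ∉ tsupport v, fderiv ℝ v p (0, 1) = 0 := fun p hp => by
    have h0 : fderiv ℝ v p = 0 := by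
      by_contra h
      exact hp (support_fderiv_subset ℝ (by simpa using h))
    simp [h0]
  have intd1 : Integrable fun p : ℝ × ℝ => ((fderiv ℝ v p (0, 1)).1) ^ 2 :=
    ((continuous_fst.comp hDc).pow 2).integrable_of_hasCompactSupport
      (HasCompactSupport.intro hsupp fun p hp => by simp [hD0 p hp])
  have intd2 : Integrable fun p : ℝ × ℝ => ((fderiv ℝ v p (0, 1)).2) ^ 2 :=
    ((continuous_snd.comp hDc).pow 2).integrable_of_hasCompactSupport
      (HasCompactSupport.intro hsupp fun p hp => by simp [hD0 p hp])
  have intq1 : Integrable fun p : ℝ × ℝ => (f1 p / p.2) ^ 2 :=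
    integrable_div_sq f1 hc1.continuous hs1 ht1
  have intq2 : Integrable fun p : ℝ × ℝ => (f2 p / p.2) ^ 2 :=
    integrable_div_sq f2 hc2.continuous hs2 ht2
  have intj : Integrable (jacsq v) := integrable_jacsq v hv hsupp
  -- zero extensions
  have ez1 : ∫ p in OmegaPlus, nsq (v p) / p.2 ^ 2 = ∫ p : ℝ × ℝ, nsq (v p) / p.2 ^ 2 := by
    refine setIntegral_eq_integral_of_forall_compl_eq_zero fun p hp => ?_
    have : p ∉ tsupport v := fun h => hp (hΩ h)
    simp [hvz p this, nsq]
  have ez2 : ∫ p in OmegaPlus, jacsq v p = ∫ p : ℝ × ℝ, jacsq v p := by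
    refine setIntegral_eq_integral_of_forall_compl_eq_zero fun p hp => ?_
    exact jacsq_zero_of_nmem v (fun h => hp (hΩ h))
  rw [ez1, ez2]
  have esum : ∫ p : ℝ × ℝ, nsq (v p) / p.2 ^ 2 =
      (∫ p : ℝ × ℝ, (f1 p / p.2) ^ 2) + ∫ p : ℝ × ℝ, (f2 p / p.2) ^ 2 := by
    rw [← integral_add intq1 intq2]
    refine integral_congr_ae (Filter.Eventually.of_forall fun p => ?_)
    simp only [nsq, hf1, hf2, div_pow, add_div]
  have hsum2 : (∫ p : ℝ × ℝ, ((fderiv ℝ v p (0,1)).1) ^ 2) +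
      ∫ p : ℝ × ℝ, ((fderiv ℝ v p (0,1)).2) ^ 2 ≤ ∫ p : ℝ × ℝ, jacsq v p := by
    rw [← integral_add intd1 intd2]
    refine integral_mono (intd1.add intd2) intj fun p => ?_
    simp only [Pi.add_apply, jacsq, nsq]
    nlinarith [sq_nonneg (fderiv ℝ v p (1,0)).1, sq_nonneg (fderiv ℝ v p (1,0)).2]
  rw [esum]
  nlinarith [hhar1, hhar2, hsum2]


/-- There is a constant `C` such that for all `C¹` vector fields `v, w` compactly supported
in `Ω₊` and every continuous vector field `ū` on `Ω₊` with `‖ū‖_{L²(Ω₊)} < ∞` and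
`sup_{Ω₊} y·|ū| ≤ M < ∞`, one has
`|∫_{Ω₊} [((v+e₁)·∇)w]·ū| ≤ C (1 + ‖∇v‖_{L²(Ω₊)}) ‖∇w‖_{L²(Ω₊)} (‖ū‖_{L²(Ω₊)} + M)`. -/
theorem trilinear_continuity_weighted_one :
    ∃ C : ℝ, ∀ (v w ubar : ℝ × ℝ → ℝ × ℝ) (M : ℝ),
      ContDiff ℝ 1 v → ContDiff ℝ 1 w →
      HasCompactSupport v → HasCompactSupport w →
      tsupport v ⊆ OmegaPlus → tsupport w ⊆ OmegaPlus →
      ContinuousOn ubar OmegaPlus →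
      IntegrableOn (fun p => nsq (ubar p)) OmegaPlus →
      (∀ p ∈ OmegaPlus, p.2 * Real.sqrt (nsq (ubar p)) ≤ M) →
      |∫ p in OmegaPlus, dot2 (fderiv ℝ w p (v p + (1, 0))) (ubar p)| ≤
        C * (1 + (∫ p in OmegaPlus, jacsq v p) ^ ((1 : ℝ)/2)) *
          (∫ p in OmegaPlus, jacsq w p) ^ ((1 : ℝ)/2) *
          ((∫ p in OmegaPlus, nsq (ubar p)) ^ ((1 : ℝ)/2) + M) := by
  refine ⟨2, fun v w ubar M hv hw hsv hsw hΩv hΩw hubc hubint hM => ?_⟩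
  set μ : Measure (ℝ × ℝ) := volume.restrict OmegaPlus with hμ
  set G : ℝ × ℝ → ℝ := fun p => Real.sqrt (jacsq w p) with hG
  set E : ℝ × ℝ → ℝ := fun p => Real.sqrt (nsq (v p)) with hE
  set N : ℝ × ℝ → ℝ := fun p => Real.sqrt (nsq (ubar p)) with hN
  set A := ∫ p in OmegaPlus, jacsq v p with hA
  set B := ∫ p in OmegaPlus, jacsq w p with hB
  set U := ∫ p in OmegaPlus, nsq (ubar p) with hU
  have hA0 : 0 ≤ A := setIntegral_nonneg measurableSet_OmegaPlus fun p _ => jacsq_nonneg v p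
  have hB0 : 0 ≤ B := setIntegral_nonneg measurableSet_OmegaPlus fun p _ => jacsq_nonneg w p
  have hU0 : 0 ≤ U := setIntegral_nonneg measurableSet_OmegaPlus fun p _ => nsq_nonneg _
  have hM0 : 0 ≤ M := by
    have h2 : ((0:ℝ), (2:ℝ)) ∈ OmegaPlus := by norm_num [OmegaPlus]
    have h3 : (2:ℝ) * Real.sqrt (nsq (ubar ((0:ℝ), (2:ℝ)))) ≤ M := by
      simpa using hM _ h2
    nlinarith [Real.sqrt_nonneg (nsq (ubar ((0:ℝ), (2:ℝ))))]
  -- basic pointwise facts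
  have hGsq : ∀ p, G p ^ 2 = jacsq w p := fun p => Real.sq_sqrt (jacsq_nonneg w p)
  have hEsq : ∀ p, E p ^ 2 = nsq (v p) := fun p => Real.sq_sqrt (nsq_nonneg _)
  have hNsq : ∀ p, N p ^ 2 = nsq (ubar p) := fun p => Real.sq_sqrt (nsq_nonneg _)
  have hGc : Continuous G := Real.continuous_sqrt.comp (continuous_jacsq w hw)
  have hEc : Continuous E := Real.continuous_sqrt.comp (continuous_nsq.comp hv.continuous)
  have hNm : AEStronglyMeasurable N μ :=
    (Real.continuous_sqrt.comp continuous_nsq).comp_aestronglyMeasurable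
      (hubc.aestronglyMeasurable measurableSet_OmegaPlus)
  -- integrability of squares
  have intG2 : Integrable (fun p => G p ^ 2) μ := by
    rw [show (fun p => G p ^ 2) = jacsq w from funext hGsq]
    exact (integrable_jacsq w hw hsw).integrableOn
  have intN2 : Integrable (fun p => N p ^ 2) μ := by
    rw [show (fun p => N p ^ 2) = fun p => nsq (ubar p) from funext hNsq]
    exact hubint
  -- pointwise bound on the integrand
  set I : ℝ × ℝ → ℝ := fun p => dot2 (fderiv ℝ w p (v p + (1, 0))) (ubar p) with hI
  have hpt : ∀ p, |I p| ≤ G p * N p + G p * E p * N p := by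
    intro p
    have h1 := abs_dot2_le (fderiv ℝ w p (v p + (1, 0))) (ubar p)
    have h2 := sqrt_nsq_apply_le (fderiv ℝ w p) (v p + (1, 0))
    have h3 := sqrt_nsq_add_le (v p) ((1 : ℝ), (0 : ℝ))
    have h4 : Real.sqrt (nsq ((1:ℝ), (0:ℝ))) = 1 := by
      rw [show nsq ((1:ℝ), (0:ℝ)) = 1 by norm_num [nsq], Real.sqrt_one]
    have h5 : Real.sqrt (nsq (fderiv ℝ w p (v p + (1, 0)))) ≤ G p * (E p + 1) := by
      refine h2.trans ?_
      refine mul_le_mul_of_nonneg_left ?_ (Real.sqrt_nonneg _)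
      have h3' := h3
      rw [h4] at h3'
      exact h3'
    calc |I p| ≤ Real.sqrt (nsq (fderiv ℝ w p (v p + (1, 0)))) * N p := h1
      _ ≤ (G p * (E p + 1)) * N p :=
          mul_le_mul_of_nonneg_right h5 (Real.sqrt_nonneg _)
      _ = G p * N p + G p * E p * N p := by ring
  -- integrability of the dominating functions
  have intGN : Integrable (fun p => G p * N p) μ := by
    refine Integrable.mono' ((intG2.add intN2).div_const 2)
      ((hGc.aestronglyMeasurable.restrict).mul hNm) ?_
    filter_upwards with p
    simp only [Pi.add_apply]
    rw [Real.norm_eq_abs, abs_of_nonneg (mul_nonneg (Real.sqrt_nonneg _) (Real.sqrt_nonneg _))]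
    nlinarith [sq_nonneg (G p - N p), Real.sqrt_nonneg (jacsq w p),
      Real.sqrt_nonneg (nsq (ubar p))]
  have intDom : IntegrableOn (fun p => G p * E p * (M / p.2)) OmegaPlus := by
    refine integrableOn_omega_of_support (K := tsupport v) hsv hΩv ?_ ?_
    · refine ((hGc.continuousOn.mul hEc.continuousOn).mul
        (continuousOn_const.div continuous_snd.continuousOn fun p hp => ?_))
      exact ne_of_gt (lt_trans one_pos hp)
    · intro p hp
      by_contra hns
      have hv0 : v p = 0 := image_eq_zero_of_notMem_tsupport hns
      exact Function.mem_support.mp hp (by simp [hE, hv0, nsq])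
  have hNboundae : ∀ᵐ p ∂μ, N p ≤ M / p.2 := by
    rw [hμ, ae_restrict_iff' measurableSet_OmegaPlus]
    filter_upwards with p hp
    have hp2 : (0:ℝ) < p.2 := lt_trans one_pos hp
    rw [le_div_iff₀ hp2, mul_comm]
    exact hM p hp
  have intGEN : Integrable (fun p => G p * E p * N p) μ := by
    refine Integrable.mono' intDom
      (((hGc.aestronglyMeasurable.restrict).mul hEc.aestronglyMeasurable.restrict).mul hNm) ?_
    filter_upwards [hNboundae] with p hp
    rw [Real.norm_eq_abs, abs_of_nonneg (by positivity)]
    exact mul_le_mul_of_nonneg_left hp (by positivity)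
  -- step A
  have stepA : |∫ p in OmegaPlus, I p| ≤
      (∫ p, G p * N p ∂μ) + ∫ p, G p * E p * N p ∂μ := by
    rw [← integral_add intGN intGEN]
    have h0 : |∫ p, I p ∂μ| ≤ ∫ p, |I p| ∂μ := by
      simpa [Real.norm_eq_abs] using norm_integral_le_integral_norm (f := I) (μ := μ)
    refine h0.trans ?_
    refine integral_mono_of_nonneg (Filter.Eventually.of_forall fun p => abs_nonneg _)
      (intGN.add intGEN) (Filter.Eventually.of_forall fun p => ?_)
    simpa using hpt p
  -- step B
  have stepB : ∫ p, G p * N p ∂μ ≤ Real.sqrt B * Real.sqrt U := by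
    have h := integral_mul_le_sqrt_mul_sqrt μ G N hGc.aestronglyMeasurable.restrict hNm
      intG2 intN2
    rwa [show ∫ p, G p ^ 2 ∂μ = B from by rw [show (fun p => G p ^2) = jacsq w from funext hGsq],
      show ∫ p, N p ^ 2 ∂μ = U from by rw [show (fun p => N p ^2) = fun p => nsq (ubar p) from funext hNsq]] at h
  -- step C
  have intg2 : Integrable (fun p => (E p * (M / p.2)) ^ 2) μ := by
    have e : (fun p : ℝ × ℝ => (E p * (M / p.2)) ^ 2) =
        fun p => M ^ 2 * (nsq (v p) / p.2 ^ 2) := by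
      funext p
      rw [mul_pow, div_pow, hEsq]
      ring
    rw [e]
    refine Integrable.const_mul ?_ (M ^ 2)
    refine integrableOn_omega_of_support (K := tsupport v) hsv hΩv ?_ ?_
    · refine ((continuous_nsq.comp hv.continuous).continuousOn.div
        (continuous_snd.continuousOn.pow 2) fun p hp => ?_)
      exact pow_ne_zero 2 (ne_of_gt (lt_trans one_pos hp))
    · intro p hp
      by_contra hns
      have hv0 : v p = 0 := image_eq_zero_of_notMem_tsupport hns
      exact Function.mem_support.mp hp (by simp [nsq, hv0])
  have stepC : ∫ p, G p * E p * N p ∂μ ≤ Real.sqrt B * (2 * M * Real.sqrt A) := by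
    have h1 : ∫ p, G p * E p * N p ∂μ ≤ ∫ p, G p * (E p * (M / p.2)) ∂μ := by
      refine integral_mono_ae intGEN ?_ ?_
      · have : (fun p : ℝ × ℝ => G p * (E p * (M / p.2))) =
            fun p => G p * E p * (M / p.2) := by funext p; ring
        rw [this]; exact intDom
      · filter_upwards [hNboundae] with p hp
        have : G p * E p * N p ≤ G p * E p * (M / p.2) :=
          mul_le_mul_of_nonneg_left hp (by positivity)
        linarith [this]
    have hgm : AEStronglyMeasurable (fun p : ℝ × ℝ => E p * (M / p.2)) μ :=
      hEc.aestronglyMeasurable.restrict.mul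
        ((measurable_const.div measurable_snd).aestronglyMeasurable.restrict)
    have h2 := integral_mul_le_sqrt_mul_sqrt μ G (fun p => E p * (M / p.2))
      hGc.aestronglyMeasurable.restrict hgm intG2 intg2
    have h3 : ∫ p, (E p * (M / p.2)) ^ 2 ∂μ ≤ M ^ 2 * (4 * A) := by
      have e : ∫ p, (E p * (M / p.2)) ^ 2 ∂μ = M ^ 2 * ∫ p in OmegaPlus, nsq (v p) / p.2 ^ 2 := by
        rw [← integral_const_mul]
        refine integral_congr_ae (Filter.Eventually.of_forall fun p => ?_)
        show (E p * (M / p.2)) ^ 2 = M ^ 2 * (nsq (v p) / p.2 ^ 2)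
        rw [mul_pow, div_pow, hEsq]
        ring
      rw [e]
      have := hardy_vec v hv hsv hΩv
      nlinarith [sq_nonneg M]
    have h4 : Real.sqrt (∫ p, (E p * (M / p.2)) ^ 2 ∂μ) ≤ 2 * M * Real.sqrt A := by
      refine (Real.sqrt_le_sqrt h3).trans ?_
      rw [show M ^ 2 * (4 * A) = (2 * M) ^ 2 * A by ring,
        Real.sqrt_mul (sq_nonneg _), Real.sqrt_sq (by positivity)]
    calc ∫ p, G p * E p * N p ∂μ ≤ ∫ p, G p * (E p * (M / p.2)) ∂μ := h1
      _ ≤ Real.sqrt (∫ p, G p ^ 2 ∂μ) * Real.sqrt (∫ p, (E p * (M / p.2)) ^ 2 ∂μ) := h2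
      _ ≤ Real.sqrt B * (2 * M * Real.sqrt A) := by
          rw [show ∫ p, G p ^ 2 ∂μ = B from by
            rw [show (fun p => G p ^2) = jacsq w from funext hGsq]]
          exact mul_le_mul_of_nonneg_left h4 (Real.sqrt_nonneg _)
  -- final assembly
  rw [← Real.sqrt_eq_rpow, ← Real.sqrt_eq_rpow, ← Real.sqrt_eq_rpow]
  have hfin : |∫ p in OmegaPlus, I p| ≤ Real.sqrt B * Real.sqrt U +
      Real.sqrt B * (2 * M * Real.sqrt A) := by
    refine stepA.trans ?_
    exact add_le_add stepB stepC
  refine hfin.trans ?_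
  have sA := Real.sqrt_nonneg A
  have sB := Real.sqrt_nonneg B
  have sU := Real.sqrt_nonneg U
  nlinarith [mul_nonneg sB sU, mul_nonneg hM0 sB, mul_nonneg (mul_nonneg sA sB) sU,
    mul_nonneg (mul_nonneg sA sB) hM0]
end
end

section
/- Let α > 1 and p, q ≥ 0. There exists a constant C, depending only on α, such that the following holds. Let y ≥ 1, M ≥ 0, and let g : ℝ → ℂ be a measurable function satisfying |g(k)| ≤ M·(1/(y^p (1 + (|k|y)^α)) + 1/(y^q (1 + (|k|y²)^α))) for almost every k ∈ ℝ. Then the function f(x) = ∫_ℝ e^{ikx} g(k) dk belongs to L²(ℝ) and ‖f‖_{L²(ℝ)} ≤ C·M·(y^{-(p+1/2)} + y^{-(q+1)}). -/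
open MeasureTheory

noncomputable section

open Real Filter
open scoped Topology


lemma aux_one_div_le {α : ℝ} (hα : 0 < α) (k : ℝ) :
    1 / (1 + |k| ^ α) ≤ 2 ^ α * (1 + |k|) ^ (-α) := by
  have hk : (0:ℝ) ≤ |k| := abs_nonneg k
  have h0 : (0:ℝ) < 1 + |k| ^ α := by positivity
  have h1 : (1 + |k|) ^ α ≤ 2 ^ α * (1 + |k| ^ α) := by
    have hm : 1 + |k| ≤ 2 * max 1 |k| := by
      rcases le_total |k| 1 with h | h
      · have : max 1 |k| = 1 := max_eq_left h
        rw [this]; linarith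
      · have : max 1 |k| = |k| := max_eq_right h
        rw [this]; linarith
    have hmax : (max 1 |k|) ^ α ≤ 1 + |k| ^ α := by
      rcases le_total 1 |k| with h | h
      · rw [max_eq_right h]
        have : (0:ℝ) ≤ |k| ^ α := Real.rpow_nonneg hk _
        linarith
      · rw [max_eq_left h, Real.one_rpow]
        have : (0:ℝ) ≤ |k| ^ α := Real.rpow_nonneg hk _
        linarith
    calc (1 + |k|) ^ α ≤ (2 * max 1 |k|) ^ α :=
          Real.rpow_le_rpow (by positivity) hm hα.le
      _ = 2 ^ α * (max 1 |k|) ^ α := Real.mul_rpow (by norm_num) (by positivity)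
      _ ≤ 2 ^ α * (1 + |k| ^ α) := by
          have h2 : (0:ℝ) ≤ 2 ^ α := Real.rpow_nonneg (by norm_num) _
          exact mul_le_mul_of_nonneg_left hmax h2
  have h2 : (0:ℝ) < (1 + |k|) ^ α := Real.rpow_pos_of_pos (by positivity) _
  have h3 : (0:ℝ) < 2 ^ α := Real.rpow_pos_of_pos (by norm_num) _
  rw [Real.rpow_neg (by positivity), ← div_eq_mul_inv]
  rw [div_le_div_iff₀ h0 h2]
  linarith [h1]

lemma aux_meas {α : ℝ} : Measurable fun k : ℝ => 1 / (1 + |k| ^ α) := by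
  fun_prop

lemma aux_nonneg {α : ℝ} (k : ℝ) : 0 ≤ 1 / (1 + |k| ^ α) := by positivity

lemma aux_le_one {α : ℝ} (k : ℝ) : 1 / (1 + |k| ^ α) ≤ 1 := by
  rw [div_le_one (by positivity)]
  have : (0:ℝ) ≤ |k| ^ α := Real.rpow_nonneg (abs_nonneg k) _
  linarith

lemma aux_integrable {α : ℝ} (hα : 1 < α) :
    Integrable (fun k : ℝ => 1 / (1 + |k| ^ α)) := by
  have h := (integrable_one_add_norm (E := ℝ) (μ := volume) (r := α) (by simpa using hα)).const_mul (2 ^ α)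
  refine h.mono' aux_meas.aestronglyMeasurable (Filter.Eventually.of_forall fun k => ?_)
  rw [Real.norm_eq_abs, _root_.abs_of_nonneg (aux_nonneg k)]
  simpa [Real.norm_eq_abs] using aux_one_div_le (by linarith : (0:ℝ) < α) k

lemma aux_integrable_sq {α : ℝ} (hα : 1 < α) :
    Integrable (fun k : ℝ => (1 / (1 + |k| ^ α)) ^ 2) := by
  refine (aux_integrable hα).mono' (aux_meas.pow_const 2).aestronglyMeasurable
    (Filter.Eventually.of_forall fun k => ?_)
  rw [Real.norm_eq_abs, _root_.abs_of_nonneg (by positivity)]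
  calc (1 / (1 + |k| ^ α)) ^ 2 ≤ (1 / (1 + |k| ^ α)) ^ 1 := by
        apply pow_le_pow_of_le_one (aux_nonneg k) (aux_le_one k); norm_num
    _ = 1 / (1 + |k| ^ α) := pow_one _


lemma step_eps {g : ℝ → ℂ} (hg : Measurable g) {G : ℝ → ℝ} (hGm : Measurable G)
    (hG : Integrable G) (hG2 : Integrable (fun k => G k ^ 2))
    (hbd : ∀ k, ‖g k‖ ≤ G k) {ε : ℝ} (hε : 0 < ε) :
    ∫ x : ℝ, ‖∫ k : ℝ, Complex.exp (Complex.I * k * x) * g k‖ ^ 2 * Real.exp (-ε * x ^ 2)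
      ≤ 2 * π * ∫ k, G k ^ 2 := by
  set f : ℝ → ℂ := fun x => ∫ k : ℝ, Complex.exp (Complex.I * k * x) * g k with hf
  -- basic facts
  have hGnn : ∀ k, 0 ≤ G k := fun k => (norm_nonneg _).trans (hbd k)
  have hgi : Integrable g := hG.mono' hg.aestronglyMeasurable (Eventually.of_forall hbd)
  have him : ∀ k x : ℝ, ‖Complex.exp (Complex.I * k * x)‖ = 1 := by
    intro k x
    rw [Complex.norm_exp]
    simp [Complex.mul_re]
  have hcast : ∀ x : ℝ, (-(ε:ℂ) * (x:ℂ) ^ 2) = ((-ε * x ^ 2 : ℝ) : ℂ) := by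
    intro x; push_cast; ring
  have hexpnorm : ∀ x : ℝ, ‖Complex.exp (-(ε:ℂ) * (x:ℂ) ^ 2)‖ = Real.exp (-ε * x ^ 2) := by
    intro x
    rw [hcast x, ← Complex.ofReal_exp, Complex.norm_real, Real.norm_eq_abs,
      abs_of_nonneg (Real.exp_pos _).le]
  -- measurability helpers
  have mexp1 : Measurable fun w : ℝ × (ℝ × ℝ) => Complex.exp (Complex.I * w.2.1 * w.1) :=
    Complex.continuous_exp.measurable.comp
      ((measurable_const.mul (Complex.measurable_ofReal.comp (measurable_fst.comp measurable_snd))).mul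
        (Complex.measurable_ofReal.comp measurable_fst))
  have mexp2 : Measurable fun w : ℝ × (ℝ × ℝ) => Complex.exp (Complex.I * w.2.2 * w.1) :=
    Complex.continuous_exp.measurable.comp
      ((measurable_const.mul (Complex.measurable_ofReal.comp (measurable_snd.comp measurable_snd))).mul
        (Complex.measurable_ofReal.comp measurable_fst))
  have mexp3 : Measurable fun w : ℝ × (ℝ × ℝ) => Complex.exp (-(ε:ℂ) * (w.1:ℂ) ^ 2) :=
    Complex.continuous_exp.measurable.comp
      (measurable_const.mul ((Complex.measurable_ofReal.comp measurable_fst).pow_const 2))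
  -- the kernel
  set K : ℝ → ℝ × ℝ → ℂ := fun x z =>
    ((Complex.exp (Complex.I * z.1 * x) * g z.1) *
      (starRingEnd ℂ) (Complex.exp (Complex.I * z.2 * x) * g z.2)) *
      Complex.exp (-(ε:ℂ) * (x:ℂ) ^ 2) with hK
  -- Step 1: inner z-integral
  have hK1 : ∀ x : ℝ, ∫ z : ℝ × ℝ, K x z = ((‖f x‖ ^ 2 * Real.exp (-ε * x ^ 2) : ℝ) : ℂ) := by
    intro x
    rw [hK]
    rw [MeasureTheory.integral_mul_const]
    rw [MeasureTheory.Measure.volume_eq_prod]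
    rw [MeasureTheory.integral_prod_mul (f := fun k : ℝ => Complex.exp (Complex.I * k * x) * g k)
      (g := fun l : ℝ => (starRingEnd ℂ) (Complex.exp (Complex.I * l * x) * g l))]
    rw [integral_conj]
    rw [Complex.mul_conj, Complex.normSq_eq_norm_sq]
    rw [hcast x, ← Complex.ofReal_exp]
    push_cast
    ring
  -- Step 2: integrability of the kernel on the product space
  have hKmeas : AEStronglyMeasurable (Function.uncurry K) ((volume : Measure ℝ).prod (volume : Measure (ℝ × ℝ))) := by
    apply Measurable.aestronglyMeasurable
    have : Function.uncurry K = fun w : ℝ × (ℝ × ℝ) =>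
        ((Complex.exp (Complex.I * w.2.1 * w.1) * g w.2.1) *
          (starRingEnd ℂ) (Complex.exp (Complex.I * w.2.2 * w.1) * g w.2.2)) *
          Complex.exp (-(ε:ℂ) * (w.1:ℂ) ^ 2) := rfl
    rw [this]
    simp only [starRingEnd_apply]
    exact ((mexp1.mul (hg.comp (measurable_fst.comp measurable_snd))).mul
      (continuous_star.measurable.comp (mexp2.mul (hg.comp (measurable_snd.comp measurable_snd))))).mul mexp3
  have hKnorm : ∀ x : ℝ, ∀ z : ℝ × ℝ,
      ‖K x z‖ = ‖g z.1‖ * ‖g z.2‖ * Real.exp (-ε * x ^ 2) := by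
    intro x z
    rw [hK]
    simp only [norm_mul, RCLike.norm_conj, him, one_mul, mul_one, hexpnorm]
    try ring
  have hKint : Integrable (Function.uncurry K) ((volume : Measure ℝ).prod volume) := by
    have hB : Integrable (fun w : ℝ × (ℝ × ℝ) => Real.exp (-ε * w.1 ^ 2) * (G w.2.1 * G w.2.2))
        ((volume : Measure ℝ).prod volume) :=
      (integrable_exp_neg_mul_sq hε).mul_prod (hG.mul_prod hG)
    refine hB.mono' hKmeas (Eventually.of_forall fun w => ?_)
    rw [show Function.uncurry K w = K w.1 w.2 from rfl, hKnorm w.1 w.2]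
    have h1 := hbd w.2.1
    have h2 := hbd w.2.2
    have e1 := (Real.exp_pos (-ε * w.1 ^ 2)).le
    have hmul : ‖g w.2.1‖ * ‖g w.2.2‖ ≤ G w.2.1 * G w.2.2 :=
      mul_le_mul h1 h2 (norm_nonneg _) (hGnn _)
    calc ‖g w.2.1‖ * ‖g w.2.2‖ * Real.exp (-ε * w.1 ^ 2)
        ≤ G w.2.1 * G w.2.2 * Real.exp (-ε * w.1 ^ 2) :=
          mul_le_mul_of_nonneg_right hmul e1
      _ = Real.exp (-ε * w.1 ^ 2) * (G w.2.1 * G w.2.2) := by ring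
  -- Step 3: swap
  have hswap : ∫ x : ℝ, ∫ z : ℝ × ℝ, K x z = ∫ z : ℝ × ℝ, ∫ x : ℝ, K x z :=
    MeasureTheory.integral_integral_swap hKint
  -- Step 4: inner x-integral (Gaussian Fourier transform)
  have hinner : ∀ z : ℝ × ℝ, ∫ x : ℝ, K x z =
      (g z.1 * (starRingEnd ℂ) (g z.2)) *
        ((↑π / (ε:ℂ)) ^ (1/2 : ℂ) *
          Complex.exp (-(((z.1 - z.2 : ℝ) : ℂ)) ^ 2 / (4 * (ε:ℂ)))) := by
    intro z
    have hAB : ∀ x : ℝ, Complex.exp (Complex.I * z.1 * x) *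
        Complex.exp (-(Complex.I * ((z.2 : ℝ) : ℂ) * x)) =
        Complex.exp (Complex.I * ((z.1 - z.2 : ℝ) : ℂ) * x) := by
      intro x
      rw [← Complex.exp_add]
      congr 1
      push_cast
      ring
    have h1 : ∀ x : ℝ, K x z = (g z.1 * (starRingEnd ℂ) (g z.2)) *
        (Complex.exp (Complex.I * ((z.1 - z.2 : ℝ) : ℂ) * x) *
          Complex.exp (-(ε:ℂ) * (x:ℂ) ^ 2)) := by
      intro x
      rw [hK]
      simp only [map_mul, ← Complex.exp_conj, map_mul, Complex.conj_I, Complex.conj_ofReal]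
      rw [← hAB x]
      ring_nf
    simp_rw [h1]
    rw [MeasureTheory.integral_const_mul]
    rw [fourierIntegral_gaussian (by simpa using hε) (((z.1 - z.2 : ℝ) : ℂ))]
  -- the value of the inner integral in norm
  have hnorm : ∀ z : ℝ × ℝ, ‖∫ x : ℝ, K x z‖ =
      ‖g z.1‖ * ‖g z.2‖ * ((π / ε) ^ ((1:ℝ)/2) * Real.exp (-((z.1 - z.2) ^ 2 / (4 * ε)))) := by
    intro z
    rw [hinner z]
    rw [norm_mul, norm_mul, RCLike.norm_conj, norm_mul]
    congr 1
    congr 1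
    · rw [show (↑π / (ε:ℂ)) = ((π / ε : ℝ) : ℂ) by push_cast; ring]
      rw [Complex.norm_cpow_eq_rpow_re_of_pos (div_pos Real.pi_pos hε)]
      norm_num
    · rw [show (-(((z.1 - z.2 : ℝ) : ℂ)) ^ 2 / (4 * (ε:ℂ))) =
        ((-((z.1 - z.2) ^ 2 / (4 * ε)) : ℝ) : ℂ) by push_cast; ring]
      rw [← Complex.ofReal_exp, Complex.norm_real, Real.norm_eq_abs,
        abs_of_nonneg (Real.exp_pos _).le]
  -- the Gaussian weight in the k-variables
  set W : ℝ → ℝ := fun u => Real.exp (-(1/(4*ε)) * u ^ 2) with hW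
  have hWi : Integrable W := integrable_exp_neg_mul_sq (by positivity)
  have hWnn : ∀ u, 0 ≤ W u := fun u => (Real.exp_pos _).le
  have hWm : Measurable W :=
    Real.measurable_exp.comp ((measurable_id.pow_const 2).const_mul _)
  have hWeq : ∀ t : ℝ, Real.exp (-(t ^ 2 / (4 * ε))) = W t := by
    intro t; simp only [hW]; congr 1; ring
  have hWsym : ∀ a b : ℝ, W (a - b) = W (b - a) := by
    intro a b; simp only [hW]; congr 1; ring
  have hWshift : ∀ k : ℝ, (fun l : ℝ => W (k - l)) = fun l => W (l - k) := by
    intro k; funext l; rw [hWsym]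
  set c : ℝ := (π / ε) ^ ((1:ℝ)/2) with hc
  have hcnn : 0 ≤ c := Real.rpow_nonneg (by positivity) _
  set B : ℝ × ℝ → ℝ :=
    fun z => c * (1/2) * (G z.1 ^ 2 * W (z.1 - z.2) + G z.2 ^ 2 * W (z.1 - z.2)) with hB
  have hB1m : Measurable fun z : ℝ × ℝ => G z.1 ^ 2 * W (z.1 - z.2) :=
    ((hGm.comp measurable_fst).pow_const 2).mul (hWm.comp (measurable_fst.sub measurable_snd))
  have hB1 : Integrable (fun z : ℝ × ℝ => G z.1 ^ 2 * W (z.1 - z.2))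
      ((volume : Measure ℝ).prod volume) := by
    rw [MeasureTheory.integrable_prod_iff hB1m.aestronglyMeasurable]
    constructor
    · refine Eventually.of_forall fun k => ?_
      have h1 : Integrable (fun l : ℝ => W (k - l)) := by
        rw [hWshift k]; exact hWi.comp_sub_right k
      show Integrable (fun l : ℝ => G k ^ 2 * W (k - l)) volume
      exact h1.const_mul _
    · refine (hG2.mul_const (∫ u, W u)).congr (Eventually.of_forall fun k => ?_)
      show G k ^ 2 * ∫ u, W u = ∫ l : ℝ, ‖G k ^ 2 * W (k - l)‖
      have h2 : ∀ l : ℝ, ‖G k ^ 2 * W (k - l)‖ = G k ^ 2 * W (k - l) := fun l =>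
        abs_of_nonneg (mul_nonneg (sq_nonneg _) (hWnn _))
      simp_rw [h2]
      rw [MeasureTheory.integral_const_mul]
      congr 1
      rw [hWshift k, MeasureTheory.integral_sub_right_eq_self W k]
  have hB2 : Integrable (fun z : ℝ × ℝ => G z.2 ^ 2 * W (z.1 - z.2))
      ((volume : Measure ℝ).prod volume) := by
    refine hB1.swap.congr (Eventually.of_forall fun z => ?_)
    simp only [Function.comp_apply, Prod.fst_swap, Prod.snd_swap]
    rw [hWsym]
  have hBint : Integrable B ((volume : Measure ℝ).prod volume) := by
    rw [hB]
    exact ((hB1.add hB2).const_mul _)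
  have hBle : ∀ z : ℝ × ℝ, ‖∫ x : ℝ, K x z‖ ≤ B z := by
    intro z
    rw [hnorm z, hB, hWeq (z.1 - z.2)]
    have hm1 : ‖g z.1‖ * ‖g z.2‖ ≤ (G z.1 ^ 2 + G z.2 ^ 2) / 2 := by
      have h1 := hbd z.1
      have h2 := hbd z.2
      nlinarith [sq_nonneg (G z.1 - G z.2), norm_nonneg (g z.1), norm_nonneg (g z.2)]
    calc ‖g z.1‖ * ‖g z.2‖ * (c * W (z.1 - z.2))
        ≤ (G z.1 ^ 2 + G z.2 ^ 2) / 2 * (c * W (z.1 - z.2)) :=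
          mul_le_mul_of_nonneg_right hm1 (mul_nonneg hcnn (hWnn _))
      _ = c * (1/2) * (G z.1 ^ 2 * W (z.1 - z.2) + G z.2 ^ 2 * W (z.1 - z.2)) := by ring
  -- key estimate
  have key : (∫ x : ℝ, ‖f x‖ ^ 2 * Real.exp (-ε * x ^ 2))
      ≤ ∫ z : ℝ × ℝ, B z ∂((volume : Measure ℝ).prod volume) := by
    have h0 : (∫ x : ℝ, ‖f x‖ ^ 2 * Real.exp (-ε * x ^ 2))
        = (∫ x : ℝ, ∫ z : ℝ × ℝ, K x z).re := by
      simp_rw [hK1]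
      have hOfReal : (∫ x : ℝ, ((‖f x‖ ^ 2 * Real.exp (-ε * x ^ 2) : ℝ) : ℂ))
          = ((∫ x : ℝ, ‖f x‖ ^ 2 * Real.exp (-ε * x ^ 2) : ℝ) : ℂ) := integral_ofReal
      rw [hOfReal, Complex.ofReal_re]
    rw [h0, hswap]
    have h1 : (∫ z : ℝ × ℝ, ∫ x : ℝ, K x z).re ≤ ‖∫ z : ℝ × ℝ, ∫ x : ℝ, K x z‖ := by
      exact Complex.re_le_norm _
    refine h1.trans ((norm_integral_le_integral_norm _).trans ?_)
    rw [MeasureTheory.Measure.volume_eq_prod]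
    exact integral_mono_of_nonneg (Eventually.of_forall fun z => norm_nonneg _) hBint
      (Eventually.of_forall hBle)
  -- computing the integral of B
  have hWtot : ∫ u, W u = Real.sqrt (π / (1/(4*ε))) := integral_gaussian _
  have hint1 : (∫ z : ℝ × ℝ, G z.1 ^ 2 * W (z.1 - z.2) ∂((volume : Measure ℝ).prod volume))
      = (∫ k, G k ^ 2) * ∫ u, W u := by
    rw [MeasureTheory.integral_prod _ hB1]
    have h2 : ∀ k : ℝ, (∫ l, G k ^ 2 * W (k - l)) = G k ^ 2 * ∫ u, W u := by
      intro k
      rw [MeasureTheory.integral_const_mul]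
      congr 1
      rw [hWshift k, MeasureTheory.integral_sub_right_eq_self W k]
    simp_rw [h2]
    rw [MeasureTheory.integral_mul_const]
  have hint2 : (∫ z : ℝ × ℝ, G z.2 ^ 2 * W (z.1 - z.2) ∂((volume : Measure ℝ).prod volume))
      = (∫ k, G k ^ 2) * ∫ u, W u := by
    rw [← hint1, ← MeasureTheory.integral_prod_swap
      (f := fun z : ℝ × ℝ => G z.2 ^ 2 * W (z.1 - z.2))]
    refine integral_congr_ae (Eventually.of_forall fun z => ?_)
    simp only [Prod.fst_swap, Prod.snd_swap]
    rw [hWsym]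
  have hBval : (∫ z : ℝ × ℝ, B z ∂((volume : Measure ℝ).prod volume))
      = c * ((∫ k, G k ^ 2) * ∫ u, W u) := by
    rw [hB]
    rw [MeasureTheory.integral_const_mul]
    rw [integral_add hB1 hB2, hint1, hint2]
    ring
  have hSnn : 0 ≤ ∫ k, G k ^ 2 := integral_nonneg fun k => sq_nonneg _
  have hcW : c * Real.sqrt (π / (1/(4*ε))) = 2 * π := by
    rw [hc, ← Real.sqrt_eq_rpow, ← Real.sqrt_mul (by positivity)]
    rw [show (π/ε) * (π/(1/(4*ε))) = (2*π)^2 by field_simp; ring]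
    exact Real.sqrt_sq (by positivity)
  calc (∫ x : ℝ, ‖f x‖ ^ 2 * Real.exp (-ε * x ^ 2))
      ≤ ∫ z : ℝ × ℝ, B z ∂((volume : Measure ℝ).prod volume) := key
    _ = c * ((∫ k, G k ^ 2) * ∫ u, W u) := hBval
    _ = 2 * π * ∫ k, G k ^ 2 := by
        rw [hWtot, show c * ((∫ k, G k ^ 2) * Real.sqrt (π / (1/(4*ε)))) =
          (c * Real.sqrt (π / (1/(4*ε)))) * ∫ k, G k ^ 2 from by ring, hcW]

set_option maxHeartbeats 1000000

/-- For `α > 1` there is a constant `C` (depending only on `α`) such that: for all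
`p, q ≥ 0`, `y ≥ 1`, `M ≥ 0` and every measurable `g : ℝ → ℂ` with
`|g(k)| ≤ M (1/(y^p(1+(|k|y)^α)) + 1/(y^q(1+(|k|y²)^α)))` a.e., the function
`f(x) = ∫ e^{ikx} g(k) dk` belongs to `L²(ℝ)` and
`‖f‖_{L²(ℝ)} ≤ C M (y^{-(p+1/2)} + y^{-(q+1)})`. -/
theorem fourier_integral_L2_bound (α : ℝ) (hα : 1 < α) :
    ∃ C : ℝ, ∀ (p q y M : ℝ) (g : ℝ → ℂ),
      0 ≤ p → 0 ≤ q → 1 ≤ y → 0 ≤ M → Measurable g →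
      (∀ᵐ k : ℝ, ‖g k‖ ≤
        M * (1 / (y ^ p * (1 + (|k| * y) ^ α)) + 1 / (y ^ q * (1 + (|k| * y ^ 2) ^ α)))) →
      MemLp (fun x : ℝ => ∫ k : ℝ, Complex.exp (Complex.I * k * x) * g k) 2 volume ∧
      (∫ x : ℝ, ‖∫ k : ℝ, Complex.exp (Complex.I * k * x) * g k‖ ^ 2) ^ ((1 : ℝ)/2) ≤
        C * M * (y ^ (-(p + 1/2)) + y ^ (-(q + 1))) := by
  set h1 : ℝ → ℝ := fun t => 1 / (1 + |t| ^ α) with hh1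
  set I0 : ℝ := ∫ k : ℝ, h1 k ^ 2 with hI0
  have hI0nn : 0 ≤ I0 := integral_nonneg fun k => sq_nonneg _
  have hh1i : Integrable h1 := aux_integrable hα
  have hh1sqi : Integrable (fun k => h1 k ^ 2) := aux_integrable_sq hα
  have hh1nn : ∀ t, 0 ≤ h1 t := fun t => aux_nonneg t
  have hh1le1 : ∀ t, h1 t ≤ 1 := fun t => aux_le_one t
  have hh1m : Measurable h1 := aux_meas
  refine ⟨Real.sqrt (2 * π) * Real.sqrt (2 * I0), ?_⟩
  intro p q y M g hp hq hy hM hgm hbd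
  have hy0 : (0:ℝ) < y := lt_of_lt_of_le one_pos hy
  have hyp : (0:ℝ) < y ^ p := Real.rpow_pos_of_pos hy0 p
  have hyq : (0:ℝ) < y ^ q := Real.rpow_pos_of_pos hy0 q
  have hy2 : (0:ℝ) < y ^ (2:ℕ) := pow_pos hy0 2
  -- the bounding function G and its pieces
  set G : ℝ → ℝ := fun k =>
    M * (1 / (y ^ p * (1 + (|k| * y) ^ α)) + 1 / (y ^ q * (1 + (|k| * y ^ 2) ^ α))) with hGdef
  set A : ℝ → ℝ := fun k => (y ^ p)⁻¹ * h1 (y * k) with hA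
  set B : ℝ → ℝ := fun k => (y ^ q)⁻¹ * h1 (y ^ (2:ℕ) * k) with hB
  have habs1 : ∀ k : ℝ, |y * k| = |k| * y := fun k => by
    rw [abs_mul, abs_of_pos hy0]; ring
  have habs2 : ∀ k : ℝ, |y ^ (2:ℕ) * k| = |k| * y ^ (2:ℕ) := fun k => by
    rw [abs_mul, abs_of_pos hy2]; ring
  have hGAB : ∀ k, G k = M * (A k + B k) := by
    intro k
    have e1 : 1 / (y ^ p * (1 + (|k| * y) ^ α)) = A k := by
      simp only [hA, hh1, habs1 k]
      have hX : (0:ℝ) < 1 + (|k| * y) ^ α := by positivity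
      field_simp
    have e2 : 1 / (y ^ q * (1 + (|k| * y ^ 2) ^ α)) = B k := by
      simp only [hB, hh1, habs2 k]
      have hX : (0:ℝ) < 1 + (|k| * y ^ (2:ℕ)) ^ α := by positivity
      field_simp
    simp only [hGdef]
    rw [e1, e2]
  have hAnn : ∀ k, 0 ≤ A k := fun k => mul_nonneg (inv_nonneg.mpr hyp.le) (hh1nn _)
  have hBnn : ∀ k, 0 ≤ B k := fun k => mul_nonneg (inv_nonneg.mpr hyq.le) (hh1nn _)
  have hGnn : ∀ k, 0 ≤ G k := fun k => by
    rw [hGAB k]; exact mul_nonneg hM (add_nonneg (hAnn k) (hBnn k))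
  have hGm : Measurable G := by fun_prop
  -- integrability of A, B and their squares
  have hAi : Integrable A := (hh1i.comp_mul_left' hy0.ne').const_mul _
  have hBi : Integrable B := (hh1i.comp_mul_left' hy2.ne').const_mul _
  have hA2i : Integrable (fun k => A k ^ 2) := by
    refine ((Integrable.comp_mul_left' (g := fun t => h1 t ^ 2) hh1sqi hy0.ne').const_mul
      (((y ^ p)⁻¹) ^ 2)).congr (Eventually.of_forall fun k => ?_)
    simp only [hA]; rw [mul_pow]
  have hB2i : Integrable (fun k => B k ^ 2) := by
    refine ((Integrable.comp_mul_left' (g := fun t => h1 t ^ 2) hh1sqi hy2.ne').const_mul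
      (((y ^ q)⁻¹) ^ 2)).congr (Eventually.of_forall fun k => ?_)
    simp only [hB]; rw [mul_pow]
  have hGi : Integrable G := by
    refine (((hAi.add hBi).const_mul M)).congr (Eventually.of_forall fun k => (hGAB k).symm)
  have hGle : ∀ k, G k ≤ M * ((y ^ p)⁻¹ + (y ^ q)⁻¹) := by
    intro k
    rw [hGAB k]
    refine mul_le_mul_of_nonneg_left (add_le_add ?_ ?_) hM
    · calc A k ≤ (y ^ p)⁻¹ * 1 :=
          mul_le_mul_of_nonneg_left (hh1le1 _) (inv_nonneg.mpr hyp.le)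
        _ = (y ^ p)⁻¹ := mul_one _
    · calc B k ≤ (y ^ q)⁻¹ * 1 :=
          mul_le_mul_of_nonneg_left (hh1le1 _) (inv_nonneg.mpr hyq.le)
        _ = (y ^ q)⁻¹ := mul_one _
  have hG2i : Integrable (fun k => G k ^ 2) := by
    refine (hGi.const_mul (M * ((y ^ p)⁻¹ + (y ^ q)⁻¹))).mono'
      ((hGm.pow_const 2).aestronglyMeasurable) (Eventually.of_forall fun k => ?_)
    rw [Real.norm_eq_abs, abs_of_nonneg (sq_nonneg _), sq]
    exact mul_le_mul_of_nonneg_right (hGle k) (hGnn k)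
  -- truncation of g
  set g' : ℝ → ℂ := fun k => if ‖g k‖ ≤ G k then g k else 0 with hg'def
  have hg'm : Measurable g' :=
    Measurable.ite (measurableSet_le hgm.norm hGm) hgm measurable_const
  have hg'bd : ∀ k, ‖g' k‖ ≤ G k := by
    intro k
    simp only [hg'def]
    split_ifs with h
    · exact h
    · simp only [norm_zero]; exact hGnn k
  have hgg' : ∀ᵐ k : ℝ, g k = g' k := by
    filter_upwards [hbd] with k hk
    have hk' : ‖g k‖ ≤ G k := hk
    simp only [hg'def]
    exact (if_pos hk').symm
  set f' : ℝ → ℂ := fun x => ∫ k : ℝ, Complex.exp (Complex.I * k * x) * g' k with hf'def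
  have hfeq : ∀ x : ℝ, (∫ k : ℝ, Complex.exp (Complex.I * k * x) * g k) = f' x := by
    intro x
    exact integral_congr_ae (hgg'.mono fun k hk => by simp only [hk])
  have him : ∀ k x : ℝ, ‖Complex.exp (Complex.I * k * x)‖ = 1 := by
    intro k x
    rw [Complex.norm_exp]
    simp [Complex.mul_re]
  -- continuity of f'
  have hcont : Continuous f' := by
    refine continuous_of_dominated (bound := G) (fun x => ?_) (fun x => ?_) hGi ?_
    · exact (((Complex.continuous_exp.measurable.comp
        ((measurable_const.mul Complex.measurable_ofReal).mul_const _))).mul hg'm).aestronglyMeasurable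
    · refine Eventually.of_forall fun k => ?_
      rw [norm_mul, him k x, one_mul]
      exact hg'bd k
    · refine Eventually.of_forall fun k => ?_
      exact (Complex.continuous_exp.comp
        (continuous_const.mul Complex.continuous_ofReal)).mul continuous_const
  -- quantities
  set S' : ℝ := ∫ k : ℝ, G k ^ 2 with hS'
  have hS'nn : 0 ≤ S' := integral_nonneg fun k => sq_nonneg _
  set A1 : ℝ := ∫ k : ℝ, G k with hA1
  have hA1nn : 0 ≤ A1 := integral_nonneg hGnn
  have hf'bd : ∀ x, ‖f' x‖ ≤ A1 := by
    intro x
    refine (norm_integral_le_integral_norm _).trans ?_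
    refine integral_mono_of_nonneg (Eventually.of_forall fun k => norm_nonneg _) hGi
      (Eventually.of_forall fun k => ?_)
    simp only [norm_mul, him k x, one_mul]
    exact hg'bd k
  have hδ : ∀ n : ℕ, (0:ℝ) < 1 / (n + 1) := fun n => by positivity
  have hstep : ∀ n : ℕ,
      (∫ x : ℝ, ‖f' x‖ ^ 2 * Real.exp (-(1/(n+1:ℝ)) * x ^ 2)) ≤ 2 * π * S' :=
    fun n => step_eps hg'm hGm hGi hG2i hg'bd (hδ n)
  have hwmeas : ∀ n : ℕ, AEStronglyMeasurable
      (fun x : ℝ => ‖f' x‖ ^ 2 * Real.exp (-(1/(n+1:ℝ)) * x ^ 2)) volume := fun n =>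
    ((hcont.norm.pow 2).mul
      (Real.continuous_exp.comp (continuous_const.mul (continuous_pow 2)))).aestronglyMeasurable
  have hwint : ∀ n : ℕ, Integrable
      (fun x : ℝ => ‖f' x‖ ^ 2 * Real.exp (-(1/(n+1:ℝ)) * x ^ 2)) := by
    intro n
    refine ((integrable_exp_neg_mul_sq (hδ n)).const_mul (A1 ^ 2)).mono' (hwmeas n)
      (Eventually.of_forall fun x => ?_)
    rw [Real.norm_eq_abs, abs_of_nonneg (mul_nonneg (sq_nonneg _) (Real.exp_pos _).le)]
    refine mul_le_mul_of_nonneg_right ?_ (Real.exp_pos _).le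
    exact pow_le_pow_left₀ (norm_nonneg _) (hf'bd x) 2
  have hF2m : Measurable fun x : ℝ => ‖f' x‖ ^ 2 := (hcont.norm.pow 2).measurable
  have hlin : (∫⁻ x : ℝ, ENNReal.ofReal (‖f' x‖ ^ 2)) ≤ ENNReal.ofReal (2 * π * S') := by
    set fn : ℕ → ℝ → ENNReal := fun n x =>
      ENNReal.ofReal (‖f' x‖ ^ 2 * Real.exp (-(1/(n+1:ℝ)) * x ^ 2)) with hfn
    have hfnm : ∀ n, Measurable (fn n) := by
      intro n
      apply ENNReal.measurable_ofReal.comp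
      exact hF2m.mul (Real.measurable_exp.comp ((measurable_id.pow_const 2).const_mul _))
    have htend : ∀ x : ℝ, Tendsto (fun n => fn n x) atTop (𝓝 (ENNReal.ofReal (‖f' x‖ ^ 2))) := by
      intro x
      have h1 : Tendsto (fun n : ℕ => -(1/(n+1:ℝ)) * x ^ 2) atTop (𝓝 0) := by
        have h2 := (tendsto_one_div_add_atTop_nhds_zero_nat.neg).mul_const (x ^ 2)
        simpa using h2
      have h3 : Tendsto (fun n : ℕ => Real.exp (-(1/(n+1:ℝ)) * x ^ 2)) atTop (𝓝 1) := by
        have := (Real.continuous_exp.tendsto 0).comp h1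
        simpa [Function.comp_def] using this
      have h4 : Tendsto (fun n : ℕ => ‖f' x‖ ^ 2 * Real.exp (-(1/(n+1:ℝ)) * x ^ 2)) atTop
          (𝓝 (‖f' x‖ ^ 2)) := by
        have h5 := Filter.Tendsto.mul
          (tendsto_const_nhds : Tendsto (fun _ : ℕ => ‖f' x‖ ^ 2) atTop (𝓝 (‖f' x‖ ^ 2))) h3
        simpa using h5
      exact (ENNReal.continuous_ofReal.tendsto _).comp h4
    calc (∫⁻ x : ℝ, ENNReal.ofReal (‖f' x‖ ^ 2))
        = ∫⁻ x : ℝ, liminf (fun n => fn n x) atTop := by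
          refine lintegral_congr fun x => ?_
          rw [(htend x).liminf_eq]
      _ ≤ liminf (fun n => ∫⁻ x, fn n x) atTop := lintegral_liminf_le hfnm
      _ ≤ ENNReal.ofReal (2 * π * S') := by
          refine liminf_le_of_frequently_le (Frequently.of_forall fun n => ?_)
          rw [hfn]
          rw [← ofReal_integral_eq_lintegral_ofReal (hwint n)
            (Eventually.of_forall fun x => mul_nonneg (sq_nonneg _) (Real.exp_pos _).le)]
          exact ENNReal.ofReal_le_ofReal (hstep n)
  have hfsqint : Integrable (fun x : ℝ => ‖f' x‖ ^ 2) := by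
    constructor
    · exact (hcont.norm.pow 2).aestronglyMeasurable
    · rw [hasFiniteIntegral_iff_ofReal (Eventually.of_forall fun x => sq_nonneg _)]
      exact lt_of_le_of_lt hlin ENNReal.ofReal_lt_top
  constructor
  · rw [show (fun x : ℝ => ∫ k : ℝ, Complex.exp (Complex.I * k * x) * g k) = f' from
      funext hfeq]
    exact (memLp_two_iff_integrable_sq_norm hcont.aestronglyMeasurable).mpr hfsqint
  · simp only [hfeq]
    have hv1 : (∫ x : ℝ, ‖f' x‖ ^ 2) ≤ 2 * π * S' := by
      rw [integral_eq_lintegral_of_nonneg_ae (Eventually.of_forall fun x => sq_nonneg _)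
        (hcont.norm.pow 2).aestronglyMeasurable]
      have h5 := ENNReal.toReal_mono ENNReal.ofReal_ne_top hlin
      rwa [ENNReal.toReal_ofReal (mul_nonneg (by positivity) hS'nn)] at h5
    -- scaling identities
    have hyr : ∀ a : ℝ, (y ^ a)⁻¹ = y ^ (-a) := fun a => (Real.rpow_neg hy0.le a).symm
    have hscale1 : (∫ k : ℝ, h1 (y * k) ^ 2) = y⁻¹ * I0 := by
      have h6 := MeasureTheory.Measure.integral_comp_mul_left (fun t => h1 t ^ 2) y
      rw [abs_of_pos (inv_pos.mpr hy0), smul_eq_mul] at h6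
      exact h6
    have hscale2 : (∫ k : ℝ, h1 (y ^ (2:ℕ) * k) ^ 2) = (y ^ (2:ℕ))⁻¹ * I0 := by
      have h6 := MeasureTheory.Measure.integral_comp_mul_left (fun t => h1 t ^ 2) (y ^ (2:ℕ))
      rw [abs_of_pos (inv_pos.mpr hy2), smul_eq_mul] at h6
      exact h6
    have hintA2 : (∫ k, A k ^ 2) = ((y ^ p)⁻¹) ^ 2 * (y⁻¹ * I0) := by
      simp only [hA, mul_pow]
      rw [MeasureTheory.integral_const_mul, hscale1]
    have hintB2 : (∫ k, B k ^ 2) = ((y ^ q)⁻¹) ^ 2 * ((y ^ (2:ℕ))⁻¹ * I0) := by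
      simp only [hB, mul_pow]
      rw [MeasureTheory.integral_const_mul, hscale2]
    set u : ℝ := y ^ (-(2*p+1)) with hu
    set v : ℝ := y ^ (-(2*q+2)) with hv
    have hue : ((y ^ p)⁻¹) ^ 2 * y⁻¹ = u := by
      rw [hyr p, hu]
      rw [← Real.rpow_natCast (y ^ (-p)) 2, ← Real.rpow_mul hy0.le, ← Real.rpow_neg_one y,
        ← Real.rpow_add hy0]
      congr 1
      push_cast
      ring
    have hve : ((y ^ q)⁻¹) ^ 2 * (y ^ (2:ℕ))⁻¹ = v := by
      rw [hyr q, hv]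
      rw [← Real.rpow_natCast (y ^ (-q)) 2, ← Real.rpow_mul hy0.le,
        ← Real.rpow_natCast y 2, ← Real.rpow_neg hy0.le, ← Real.rpow_add hy0]
      congr 1
      push_cast
      ring
    have hSb : S' ≤ 2 * M ^ 2 * I0 * (u + v) := by
      have hmono : S' ≤ ∫ k, 2 * M ^ 2 * (A k ^ 2 + B k ^ 2) := by
        rw [hS']
        refine integral_mono hG2i ((hA2i.add hB2i).const_mul _) fun k => ?_
        have key2 : (A k + B k) ^ 2 ≤ 2 * (A k ^ 2 + B k ^ 2) := by
          nlinarith [sq_nonneg (A k - B k)]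
        calc G k ^ 2 = M ^ 2 * (A k + B k) ^ 2 := by rw [hGAB k]; ring
          _ ≤ M ^ 2 * (2 * (A k ^ 2 + B k ^ 2)) :=
            mul_le_mul_of_nonneg_left key2 (sq_nonneg M)
          _ = 2 * M ^ 2 * (A k ^ 2 + B k ^ 2) := by ring
      refine hmono.trans (le_of_eq ?_)
      rw [MeasureTheory.integral_const_mul, integral_add hA2i hB2i, hintA2, hintB2,
        show ((y ^ p)⁻¹) ^ 2 * (y⁻¹ * I0) = (((y ^ p)⁻¹) ^ 2 * y⁻¹) * I0 by ring,
        show ((y ^ q)⁻¹) ^ 2 * ((y ^ (2:ℕ))⁻¹ * I0) = (((y ^ q)⁻¹) ^ 2 * (y ^ (2:ℕ))⁻¹) * I0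
          by ring,
        hue, hve]
      ring
    rw [← Real.sqrt_eq_rpow]
    have hfin1 : Real.sqrt (∫ x : ℝ, ‖f' x‖ ^ 2) ≤
        Real.sqrt (2 * π * (2 * M ^ 2 * I0 * (u + v))) := by
      apply Real.sqrt_le_sqrt
      exact hv1.trans (mul_le_mul_of_nonneg_left hSb (by positivity))
    refine hfin1.trans ?_
    rw [show 2 * π * (2 * M ^ 2 * I0 * (u + v)) = (2 * π) * ((2 * I0) * (M ^ 2 * (u + v)))
        from by ring,
      Real.sqrt_mul (by positivity), Real.sqrt_mul (by linarith : (0:ℝ) ≤ 2 * I0),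
      Real.sqrt_mul (sq_nonneg M), Real.sqrt_sq hM]
    have hunn : 0 ≤ u := Real.rpow_nonneg hy0.le _
    have hvnn : 0 ≤ v := Real.rpow_nonneg hy0.le _
    have hsqrtadd : Real.sqrt (u + v) ≤ Real.sqrt u + Real.sqrt v := by
      have h7 : u + v ≤ (Real.sqrt u + Real.sqrt v) ^ 2 := by
        nlinarith [Real.sq_sqrt hunn, Real.sq_sqrt hvnn,
          mul_nonneg (Real.sqrt_nonneg u) (Real.sqrt_nonneg v)]
      have h8 := Real.sqrt_le_sqrt h7
      rwa [Real.sqrt_sq (by positivity)] at h8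
    have hsu : Real.sqrt u = y ^ (-(p + 1/2)) := by
      rw [hu, Real.sqrt_eq_rpow, ← Real.rpow_mul hy0.le]
      congr 1
      ring
    have hsv : Real.sqrt v = y ^ (-(q + 1)) := by
      rw [hv, Real.sqrt_eq_rpow, ← Real.rpow_mul hy0.le]
      congr 1
      ring
    calc Real.sqrt (2 * π) * (Real.sqrt (2 * I0) * (M * Real.sqrt (u + v)))
        ≤ Real.sqrt (2 * π) * (Real.sqrt (2 * I0) * (M * (Real.sqrt u + Real.sqrt v))) := by
          refine mul_le_mul_of_nonneg_left (mul_le_mul_of_nonneg_left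
            (mul_le_mul_of_nonneg_left hsqrtadd hM) (Real.sqrt_nonneg _)) (Real.sqrt_nonneg _)
      _ = Real.sqrt (2 * π) * Real.sqrt (2 * I0) * M * (y ^ (-(p + 1/2)) + y ^ (-(q + 1))) := by
          rw [hsu, hsv]; ring
end
end
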